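/- Let ε ∈ ℝ and let ω : ℝ → ℝ be differentiable. Define V(A,φ) = −(εA/(1+A)) cos φ and G(A,φ) = −(εA/(2(1+A)))·sin(φ + ω(A)/2)/sin(ω(A)/2). Then for all A, φ ∈ ℝ with A ≠ −1 and sin(ω(A)/2) ≠ 0: (∂V/∂A)(A,φ)·(∂G/∂φ)(A,φ) − (ω′(A)/2)·((∂G/∂φ)(A,φ))² = (ε²A/(2(1+A)²))·(cos(φ + ω(A)/2)/sin(ω(A)/2))·[ cos φ/(1+A) − A·ω′(A)·cos(φ + ω(A)/2)/(4 sin(ω(A)/2)) ]. -/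
import Mathlib


/-- The tokamap control term (Eq. (13) reduced to its two surviving terms): with
`V(A,φ) = -(εA/(1+A)) cos φ` and `ΓV(A,φ) = G(A,φ) = -(εA/(2(1+A))) sin(φ+ω(A)/2)/sin(ω(A)/2)`,
one has `(∂_A V)(∂_φ G) - (ω'(A)/2)(∂_φ G)²
  = (ε²A/(2(1+A)²))(cos(φ+ω(A)/2)/sin(ω(A)/2))[cos φ/(1+A) - Aω'(A)cos(φ+ω(A)/2)/(4 sin(ω(A)/2))]`
for `A ≠ -1` and `sin(ω(A)/2) ≠ 0`. -/
theorem tokamap_control_term (ε : ℝ) (ω : ℝ → ℝ) (hω : Differentiable ℝ ω)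
    (V G : ℝ → ℝ → ℝ)
    (hV : ∀ A φ : ℝ, V A φ = -(ε * A / (1 + A)) * Real.cos φ)
    (hG : ∀ A φ : ℝ, G A φ =
      -(ε * A / (2 * (1 + A))) * (Real.sin (φ + ω A / 2) / Real.sin (ω A / 2))) :
    ∀ A φ : ℝ, A ≠ -1 → Real.sin (ω A / 2) ≠ 0 →
      deriv (fun a => V a φ) A * deriv (fun p => G A p) φ
          - (deriv ω A / 2) * (deriv (fun p => G A p) φ) ^ 2
        = (ε ^ 2 * A / (2 * (1 + A) ^ 2)) * (Real.cos (φ + ω A / 2) / Real.sin (ω A / 2))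
            * (Real.cos φ / (1 + A)
               - A * deriv ω A * Real.cos (φ + ω A / 2) / (4 * Real.sin (ω A / 2))) := by
  intro A φ hA hs
  have h1 : (1:ℝ) + A ≠ 0 := by intro h; apply hA; linarith
  have hVd : deriv (fun a => V a φ) A
      = -((ε * 1 * (1 + A) - ε * A * (0 + 1)) / (1 + A) ^ 2) * Real.cos φ := by
    have hfun : (fun a => V a φ) = fun a => -(ε * a / (1 + a)) * Real.cos φ := by
      funext a; rw [hV]
    rw [hfun]
    simpa using ((((hasDerivAt_id A).const_mul ε).div ((hasDerivAt_id A).const_add 1)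
      h1).neg.mul_const (Real.cos φ)).deriv
  have hGd : deriv (fun p => G A p) φ
      = -(ε * A / (2 * (1 + A))) * (Real.cos (φ + ω A / 2) * 1 / Real.sin (ω A / 2)) := by
    have hfun : (fun p => G A p)
        = fun p => -(ε * A / (2 * (1 + A))) * (Real.sin (p + ω A / 2) / Real.sin (ω A / 2)) := by
      funext p; rw [hG]
    rw [hfun]
    simpa using (((((hasDerivAt_id φ).add_const (ω A / 2)).sin).div_const
      (Real.sin (ω A / 2))).const_mul (-(ε * A / (2 * (1 + A))))).deriv
  rw [hVd, hGd]
  field_simp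
  ring
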